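/- Let t ≥ 4, k₁,…,k_t ≥ 1, and G = G(t; k₁,…,k_t). Then the 2-domination number of G equals γ₂(G) = 4·∑_{i=1}^{t} k_i + t. -/

import Mathlib

open Classical Finset
noncomputable section

/-- `S` is a 2-dominating set of `G`: every vertex outside `S` has ≥ 2 neighbors in `S`. -/
def IsTwoDomSet {V : Type*} [Fintype V] (G : SimpleGraph V) (S : Finset V) : Prop :=
  ∀ v, v ∉ S → 2 ≤ (G.neighborFinset v ∩ S).card

/-- The 2-domination number. -/
noncomputable def gamma2 {V : Type*} [Fintype V] (G : SimpleGraph V) : ℕ :=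
  sInf {k | ∃ S : Finset V, IsTwoDomSet G S ∧ S.card = k}

/-- `S` is an annihilation set of `G`: the sum of degrees over `S` is at most `m(G)`. -/
def IsAnnSet {V : Type*} [Fintype V] (G : SimpleGraph V) (S : Finset V) : Prop :=
  ∑ v ∈ S, G.degree v ≤ G.edgeFinset.card

/-- The annihilation number: the largest size of an annihilation set (equivalently, the
largest `k` such that the sum of the `k` smallest degrees is at most the edge count). -/
noncomputable def annihilation {V : Type*} [Fintype V] (G : SimpleGraph V) : ℕ :=
  sSup {k | ∃ S : Finset V, IsAnnSet G S ∧ S.card = k}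

/-- Vertices of `G(t; k₁,…,k_t)`: `none` is the hub `w`; `some (Sum.inl ⟨i, j⟩)` is the
`j`-th vertex of the `i`-th cycle `C_{3kᵢ+1}` (vertex `0` is joined to `w`);
`some (Sum.inr ⟨i, p⟩)` is the pendant vertex attached to cycle vertex `p + 1`. -/
abbrev GVert (t : ℕ) (k : Fin t → ℕ) : Type :=
  Option ((Σ i : Fin t, Fin (3 * k i + 1)) ⊕ (Σ i : Fin t, Fin (3 * k i)))

/-- The counterexample graph `G(t; k₁,…,k_t)`. -/
def GG (t : ℕ) (k : Fin t → ℕ) : SimpleGraph (GVert t k) :=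
  SimpleGraph.fromRel (fun a b =>
    match a, b with
    | none, some (Sum.inl ⟨_, j⟩) => (j : ℕ) = 0
    | some (Sum.inl ⟨i, a⟩), some (Sum.inl ⟨i', b⟩) =>
        i = i' ∧ ((b : ℕ) = (a : ℕ) + 1 ∨ ((a : ℕ) = 3 * k i ∧ (b : ℕ) = 0))
    | some (Sum.inl ⟨i, a⟩), some (Sum.inr ⟨i', p⟩) => i = i' ∧ (a : ℕ) = (p : ℕ) + 1
    | _, _ => False)

namespace G10
variable {t : ℕ} {k : Fin t → ℕ}

def cy (i : Fin t) (j : Fin (3 * k i + 1)) : GVert t k := some (Sum.inl ⟨i, j⟩)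
def pe (i : Fin t) (p : Fin (3 * k i)) : GVert t k := some (Sum.inr ⟨i, p⟩)

def extra (i : Fin t) (b : Fin (3 * k i + 1)) : GVert t k :=
  if h : (b : ℕ) = 0 then none else pe i ⟨(b : ℕ) - 1, by omega⟩

lemma fin_succ_iff {m : ℕ} (a b : Fin (m + 1)) :
    ((b : ℕ) = (a : ℕ) + 1 ∨ ((a : ℕ) = m ∧ (b : ℕ) = 0)) ↔ b = a + 1 := by
  have hv : ((a + 1 : Fin (m+1)) : ℕ) = if a = Fin.last m then 0 else (a : ℕ) + 1 :=
    Fin.val_add_one a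
  rw [Fin.ext_iff, hv]
  rcases eq_or_ne a (Fin.last m) with h | h
  · simp [h, Fin.last]
    omega
  · have : (a : ℕ) ≠ m := fun hh => h (Fin.ext hh)
    simp [h]
    omega

lemma adj_cy_cases {i : Fin t} {b : Fin (3 * k i + 1)} {u : GVert t k}
    (h : (GG t k).Adj (cy i b) u) : u = cy i (b + 1) ∨ u = cy i (b - 1) ∨ u = extra i b := by
  rw [GG, SimpleGraph.fromRel_adj] at h
  obtain ⟨hne, h⟩ := h
  rcases u with _ | (⟨i', c⟩ | ⟨i', p⟩)
  · rcases h with h | h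
    · exact absurd h (by simp [cy])
    · right; right
      have hb : (b : ℕ) = 0 := h
      simp [extra, hb]
  · rcases h with ⟨hi, hc⟩ | ⟨hi, hc⟩
    · subst hi
      left
      have : c = b + 1 := (fin_succ_iff b c).mp hc
      simp [cy, this]
    · subst hi
      right; left
      have : b = c + 1 := (fin_succ_iff c b).mp hc
      have : c = b - 1 := by rw [this]; open Fin.CommRing in ring
      simp [cy, this]
  · rcases h with ⟨hi, hc⟩ | h
    · subst hi
      right; right
      have hb0 : ¬ (b : ℕ) = 0 := by omega
      have : p = ⟨(b : ℕ) - 1, by omega⟩ := by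
        apply Fin.ext; simp; omega
      simp [extra, hb0, pe, this]
    · exact absurd h (by simp [cy])

lemma adj_pe_cases {i : Fin t} {p : Fin (3 * k i)} {u : GVert t k}
    (h : (GG t k).Adj (pe i p) u) : u = cy i ⟨(p : ℕ) + 1, by omega⟩ := by
  rw [GG, SimpleGraph.fromRel_adj] at h
  obtain ⟨hne, h⟩ := h
  rcases u with _ | (⟨i', c⟩ | ⟨i', p'⟩)
  · exact absurd h (by simp [pe])
  · rcases h with h | ⟨hi, hc⟩
    · exact absurd h (by simp [pe])
    · subst hi
      have : c = ⟨(p : ℕ) + 1, by omega⟩ := by apply Fin.ext; simpa using hc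
      simp [cy, this]
  · exact absurd h (by simp [pe])

lemma adj_hub_cy {i : Fin t} {j : Fin (3 * k i + 1)} (h : (j : ℕ) = 0) :
    (GG t k).Adj none (cy i j) := by
  rw [GG, SimpleGraph.fromRel_adj]
  exact ⟨by simp [cy], Or.inl h⟩

lemma adj_cy_cy {i : Fin t} {a b : Fin (3 * k i + 1)} (h : (b : ℕ) = (a : ℕ) + 1) :
    (GG t k).Adj (cy i a) (cy i b) := by
  rw [GG, SimpleGraph.fromRel_adj]
  have hne : a ≠ b := fun e => by rw [e] at h; omega
  exact ⟨by simpa [cy] using hne.symm ∘ Eq.symm, Or.inl ⟨rfl, Or.inl h⟩⟩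

lemma adj_cy_pe {i : Fin t} {a : Fin (3 * k i + 1)} {p : Fin (3 * k i)}
    (h : (a : ℕ) = (p : ℕ) + 1) : (GG t k).Adj (cy i a) (pe i p) := by
  rw [GG, SimpleGraph.fromRel_adj]
  exact ⟨by simp [cy, pe], Or.inl ⟨rfl, h⟩⟩

lemma two_le_of_pair {V : Type*} [Fintype V] {G : SimpleGraph V}
    {v : V} [Fintype (G.neighborSet v)] {S : Finset V} {a b : V} (hab : a ≠ b)
    (ha : G.Adj v a) (hb : G.Adj v b) (haS : a ∈ S) (hbS : b ∈ S) :
    2 ≤ (G.neighborFinset v ∩ S).card := by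
  have hsub : ({a, b} : Finset V) ⊆ G.neighborFinset v ∩ S := by
    intro x hx
    rcases Finset.mem_insert.mp hx with rfl | hx
    · exact Finset.mem_inter.mpr ⟨G.mem_neighborFinset v x |>.mpr ha, haS⟩
    · rcases Finset.mem_singleton.mp hx with rfl
      exact Finset.mem_inter.mpr ⟨G.mem_neighborFinset v _ |>.mpr hb, hbS⟩
  calc 2 = ({a, b} : Finset V).card := (Finset.card_pair hab).symm
    _ ≤ _ := Finset.card_le_card hsub

def SU (t : ℕ) (k : Fin t → ℕ) : Finset (GVert t k) :=
  ((univ : Finset (Σ i : Fin t, Fin (3 * k i))).image (fun q => some (Sum.inr q))) ∪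
  (((univ : Finset (Σ i : Fin t, Fin (3 * k i + 1))).filter
      (fun q => (q.2 : ℕ) % 3 = 0)).image (fun q => some (Sum.inl q)))

lemma pe_mem_SU (i : Fin t) (p : Fin (3 * k i)) : pe i p ∈ SU t k := by
  apply Finset.mem_union_left
  exact Finset.mem_image.mpr ⟨⟨i, p⟩, Finset.mem_univ _, rfl⟩

lemma cy_mem_SU {i : Fin t} {j : Fin (3 * k i + 1)} (h : (j : ℕ) % 3 = 0) :
    cy i j ∈ SU t k := by
  apply Finset.mem_union_right
  exact Finset.mem_image.mpr ⟨⟨i, j⟩, Finset.mem_filter.mpr ⟨Finset.mem_univ _, h⟩, rfl⟩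

lemma card_mod3 (m : ℕ) : ((Finset.range (3 * m + 1)).filter (fun x => x % 3 = 0)).card = m + 1 := by
  induction m with
  | zero => decide
  | succ n ih =>
      have h3 : 3 * (n + 1) + 1 = ((3 * n + 1) + 1) + 1 + 1 := by ring
      rw [h3, Finset.range_add_one, Finset.range_add_one, Finset.range_add_one,
        Finset.filter_insert, Finset.filter_insert, Finset.filter_insert]
      rw [if_pos (by omega : ((3 * n + 1) + 1 + 1) % 3 = 0),
        if_neg (by omega : ¬ ((3 * n + 1) + 1) % 3 = 0),
        if_neg (by omega : ¬ (3 * n + 1) % 3 = 0)]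
      rw [Finset.card_insert_of_notMem (by simp), ih]

lemma card_fin_mod3 (m : ℕ) :
    ((univ : Finset (Fin (3 * m + 1))).filter (fun j : Fin _ => (j : ℕ) % 3 = 0)).card = m + 1 := by
  have himg : ((univ : Finset (Fin (3 * m + 1))).filter (fun j : Fin _ => (j : ℕ) % 3 = 0)).image
      Fin.val = (Finset.range (3 * m + 1)).filter (fun x => x % 3 = 0) := by
    ext x
    simp only [Finset.mem_image, Finset.mem_filter, Finset.mem_univ, true_and,
      Finset.mem_range]
    constructor
    · rintro ⟨a, ha, rfl⟩
      exact ⟨a.isLt, ha⟩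
    · rintro ⟨hx, hm⟩
      exact ⟨⟨x, hx⟩, hm, rfl⟩
  rw [← card_mod3 m, ← himg, Finset.card_image_of_injective _ Fin.val_injective]

lemma card_SU : (SU t k).card = 4 * (∑ i, k i) + t := by
  rw [SU, Finset.card_union_of_disjoint]
  · rw [Finset.card_image_of_injective _ (fun a b h => by simpa using h),
      Finset.card_image_of_injective _ (fun a b h => by simpa using h)]
    have h1 : (univ : Finset (Σ i : Fin t, Fin (3 * k i))).card = ∑ i, 3 * k i := by
      simp [Finset.card_univ]
    have h2 : ((univ : Finset (Σ i : Fin t, Fin (3 * k i + 1))).filter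
        (fun q => (q.2 : ℕ) % 3 = 0)).card = ∑ i : Fin t, (k i + 1) := by
      have : (univ : Finset (Σ i : Fin t, Fin (3 * k i + 1))).filter
          (fun q => (q.2 : ℕ) % 3 = 0) =
          (univ : Finset (Fin t)).sigma
            (fun i => (univ : Finset (Fin (3 * k i + 1))).filter
              (fun j : Fin _ => (j : ℕ) % 3 = 0)) := by
        ext ⟨i, j⟩
        simp [Finset.mem_sigma]
      rw [this, Finset.card_sigma]
      exact Finset.sum_congr rfl (fun i _ => card_fin_mod3 (k i))
    have hA : ∑ i : Fin t, 3 * k i = 3 * ∑ i, k i := (Finset.mul_sum _ _ _).symm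
    have hB : ∑ i : Fin t, (k i + 1) = (∑ i, k i) + t := by
      rw [Finset.sum_add_distrib]; simp
    rw [h1, h2, hA, hB]; ring
  · rw [Finset.disjoint_left]
    rintro a ha hb
    obtain ⟨q, -, rfl⟩ := Finset.mem_image.mp ha
    obtain ⟨q', -, h⟩ := Finset.mem_image.mp hb
    simp at h

lemma SU_twoDom (ht : 4 ≤ t) : IsTwoDomSet (GG t k) (SU t k) := by
  intro v hv
  rcases v with _ | (⟨i, j⟩ | ⟨i, p⟩)
  · -- hub
    have h0 : (0 : ℕ) < t := by omega
    have h1 : (1 : ℕ) < t := by omega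
    refine two_le_of_pair (a := cy ⟨0, h0⟩ ⟨0, by omega⟩) (b := cy ⟨1, h1⟩ ⟨0, by omega⟩)
      ?_ (adj_hub_cy rfl) (adj_hub_cy rfl) (cy_mem_SU (by simp)) (cy_mem_SU (by simp))
    simp [cy]
  · -- cycle vertex
    have hj : ¬ (j : ℕ) % 3 = 0 := fun h => hv (cy_mem_SU h)
    have hj1 : 1 ≤ (j : ℕ) := by omega
    have hjlt : (j : ℕ) < 3 * k i + 1 := j.isLt
    have hp : (GG t k).Adj (cy i j) (pe i ⟨(j : ℕ) - 1, by omega⟩) :=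
      adj_cy_pe (by simp; omega)
    rcases (by omega : (j : ℕ) % 3 = 1 ∨ (j : ℕ) % 3 = 2) with h1 | h2
    · exact two_le_of_pair (a := pe i ⟨(j : ℕ) - 1, by omega⟩)
        (b := cy i ⟨(j : ℕ) - 1, by omega⟩) (by simp [pe, cy]) hp
        ((adj_cy_cy (a := ⟨(j : ℕ) - 1, by omega⟩) (b := j) (by simp; omega)).symm)
        (pe_mem_SU _ _) (cy_mem_SU (by simp; omega))
    · have hlt : (j : ℕ) + 1 < 3 * k i + 1 := by omega
      exact two_le_of_pair (a := pe i ⟨(j : ℕ) - 1, by omega⟩)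
        (b := cy i ⟨(j : ℕ) + 1, hlt⟩) (by simp [pe, cy]) hp
        (adj_cy_cy (by simp))
        (pe_mem_SU _ _) (cy_mem_SU (by simp; omega))
  · -- pendant
    exact absurd (pe_mem_SU i p) hv

end G10

namespace G10
variable {t : ℕ} {k : Fin t → ℕ}

lemma no_two {V : Type*} [Fintype V] {G : SimpleGraph V} {v : V}
    [Fintype (G.neighborSet v)] {S : Finset V} (e : V)
    (h : ∀ u, G.Adj v u → u ∈ S → u = e)
    (h2 : 2 ≤ (G.neighborFinset v ∩ S).card) : False := by
  have hsub : G.neighborFinset v ∩ S ⊆ {e} := by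
    intro u hu
    obtain ⟨hu1, hu2⟩ := Finset.mem_inter.mp hu
    exact Finset.mem_singleton.mpr (h u ((G.mem_neighborFinset v u).mp hu1) hu2)
  have := (Finset.card_le_card hsub).trans_eq (Finset.card_singleton _)
  omega

lemma pend_mem_of_twoDom {S : Finset (GVert t k)} (hS : IsTwoDomSet (GG t k) S)
    (i : Fin t) (p : Fin (3 * k i)) : pe i p ∈ S := by
  by_contra hp
  exact no_two (cy i ⟨(p : ℕ) + 1, by omega⟩) (fun u hadj _ => adj_pe_cases hadj) (hS _ hp)

lemma cycle_bound {S : Finset (GVert t k)} (hS : IsTwoDomSet (GG t k) S) (i : Fin t) :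
    k i + 1 ≤ ((univ : Finset (Fin (3 * k i + 1))).filter (fun j : Fin _ => cy i j ∈ S)).card := by
  set Ti := (univ : Finset (Fin (3 * k i + 1))).filter (fun j : Fin _ => cy i j ∈ S) with hTi
  have hwin : ∀ x : Fin (3 * k i + 1), ∃ c, c ∈ Ti ∧ (c = x ∨ c = x + 1 ∨ c = x + 2) := by
    intro x
    by_contra hcon
    have hmem : ∀ y : Fin (3 * k i + 1), cy i y ∈ S → y ∈ Ti :=
      fun y hy => Finset.mem_filter.mpr ⟨Finset.mem_univ _, hy⟩
    have hx : cy i x ∉ S := fun h => hcon ⟨x, hmem x h, Or.inl rfl⟩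
    have hx1 : cy i (x + 1) ∉ S := fun h => hcon ⟨x + 1, hmem _ h, Or.inr (Or.inl rfl)⟩
    have hx2 : cy i (x + 2) ∉ S := fun h => hcon ⟨x + 2, hmem _ h, Or.inr (Or.inr rfl)⟩
    have e1 : x + 1 + 1 = x + 2 := by open Fin.CommRing in ring
    have e2 : x + 1 - 1 = x := by open Fin.CommRing in ring
    refine no_two (extra i (x + 1)) ?_ (hS (cy i (x + 1)) hx1)
    intro u hadj huS
    rcases adj_cy_cases hadj with rfl | rfl | rfl
    · rw [e1] at huS; exact absurd huS hx2
    · rw [e2] at huS; exact absurd huS hx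
    · rfl
  choose f hf1 hf2 using hwin
  have hmap : ∀ x ∈ (univ : Finset (Fin (3 * k i + 1))), f x ∈ Ti := fun x _ => hf1 x
  have hfib : ∀ b ∈ Ti, ((univ : Finset (Fin (3 * k i + 1))).filter
      (fun x : Fin _ => f x = b)).card ≤ 3 := by
    intro b _
    have hsub : (univ : Finset (Fin (3 * k i + 1))).filter (fun x : Fin _ => f x = b) ⊆
        {b, b - 1, b - 2} := by
      intro x hx
      have hb := (Finset.mem_filter.mp hx).2
      simp only [Finset.mem_insert, Finset.mem_singleton]
      rcases hf2 x with h | h | h <;> rw [hb] at h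
      · exact Or.inl h.symm
      · refine Or.inr (Or.inl ?_)
        rw [h]; open Fin.CommRing in ring
      · refine Or.inr (Or.inr ?_)
        rw [h]; open Fin.CommRing in ring
    refine (Finset.card_le_card hsub).trans ?_
    refine (Finset.card_insert_le _ _).trans ?_
    refine Nat.succ_le_succ ?_
    refine (Finset.card_insert_le _ _).trans ?_
    simp
  have hcount := Finset.card_le_mul_card_image_of_maps_to hmap 3 hfib
  rw [Finset.card_univ, Fintype.card_fin] at hcount
  omega

lemma lower_bound {S : Finset (GVert t k)} (hS : IsTwoDomSet (GG t k) S) :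
    4 * (∑ i, k i) + t ≤ S.card := by
  set A : Finset (GVert t k) :=
    ((univ : Finset (Σ i : Fin t, Fin (3 * k i))).image (fun q => some (Sum.inr q))) ∪
    (((univ : Finset (Σ i : Fin t, Fin (3 * k i + 1))).filter
        (fun q => some (Sum.inl q) ∈ S)).image (fun q => some (Sum.inl q))) with hA
  have hAS : A ⊆ S := by
    intro v hv
    rcases Finset.mem_union.mp hv with h | h
    · obtain ⟨⟨i, p⟩, -, rfl⟩ := Finset.mem_image.mp h
      exact pend_mem_of_twoDom hS i p
    · obtain ⟨q, hq, rfl⟩ := Finset.mem_image.mp h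
      exact (Finset.mem_filter.mp hq).2
  have hcardA : 4 * (∑ i, k i) + t ≤ A.card := by
    rw [hA, Finset.card_union_of_disjoint]
    · rw [Finset.card_image_of_injective _ (fun a b h => by simpa using h),
        Finset.card_image_of_injective _ (fun a b h => by simpa using h)]
      have h1 : (univ : Finset (Σ i : Fin t, Fin (3 * k i))).card = ∑ i, 3 * k i := by
        simp [Finset.card_univ]
      have h2 : ∑ i : Fin t, (k i + 1) ≤ ((univ : Finset (Σ i : Fin t, Fin (3 * k i + 1))).filter
          (fun q => some (Sum.inl q) ∈ S)).card := by
        have hsig : (univ : Finset (Σ i : Fin t, Fin (3 * k i + 1))).filter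
            (fun q => some (Sum.inl q) ∈ S) =
            (univ : Finset (Fin t)).sigma
              (fun i => (univ : Finset (Fin (3 * k i + 1))).filter
                (fun j : Fin _ => cy i j ∈ S)) := by
          ext ⟨i, j⟩
          simp [Finset.mem_sigma, cy]
          exact ⟨fun h => Finset.mem_filter.mpr ⟨Finset.mem_univ _, h⟩, fun h => (Finset.mem_filter.mp h).2⟩
        rw [hsig, Finset.card_sigma]
        exact Finset.sum_le_sum (fun i _ => cycle_bound hS i)
      have hA' : ∑ i : Fin t, 3 * k i = 3 * ∑ i, k i := (Finset.mul_sum _ _ _).symm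
      have hB : ∑ i : Fin t, (k i + 1) = (∑ i, k i) + t := by
        rw [Finset.sum_add_distrib]; simp
      rw [h1, hA']
      omega
    · rw [Finset.disjoint_left]
      rintro a ha hb
      obtain ⟨q, -, rfl⟩ := Finset.mem_image.mp ha
      obtain ⟨q', -, h⟩ := Finset.mem_image.mp hb
      simp at h
  exact hcardA.trans (Finset.card_le_card hAS)

end G10


/-- `γ₂(G(t;k₁,…,k_t)) = 4·∑ᵢ kᵢ + t`. -/
theorem stmt10 (t : ℕ) (ht : 4 ≤ t) (k : Fin t → ℕ) (hk : ∀ i, 1 ≤ k i) :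
    gamma2 (GG t k) = 4 * ∑ i, k i + t := by
  rw [gamma2]
  apply le_antisymm
  · exact Nat.sInf_le ⟨G10.SU t k, G10.SU_twoDom ht, G10.card_SU⟩
  · refine le_csInf ⟨_, G10.SU t k, G10.SU_twoDom ht, G10.card_SU⟩ ?_
    rintro m ⟨S, hS, rfl⟩
    exact G10.lower_bound hS
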